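/- Let p be a prime, k, n positive integers, m ≤ n a natural number, and β_1 ≥ β_2 ≥ ⋯ ≥ β_m integers with k ≥ β_1 and β_m ≥ 1. If K is a subgroup of (ℤ/p^kℤ)^n that is isomorphic to ℤ/p^{β_1}ℤ × ⋯ × ℤ/p^{β_m}ℤ, then the quotient group (ℤ/p^kℤ)^n / K is isomorphic to (ℤ/p^kℤ)^{n−m} × ℤ/p^{k−β_m}ℤ × ⋯ × ℤ/p^{k−β_1}ℤ. -/

import Mathlib

open Finset

namespace Stmt5Aux

variable {A B : Type*} [AddCommGroup A] [AddCommGroup B]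

/-- scalar multiplication by `t` as an `AddMonoidHom`. -/
def sm (t : ℕ) (A : Type*) [AddCommGroup A] : A →+ A where
  toFun x := t • x
  map_zero' := smul_zero t
  map_add' a b := smul_add t a b

@[simp] lemma sm_apply (t : ℕ) (x : A) : sm t A x = t • x := rfl

noncomputable def SR (t : ℕ) (A : Type*) [AddCommGroup A] : ℕ := Nat.card (sm t A).range
noncomputable def SK (t : ℕ) (A : Type*) [AddCommGroup A] : ℕ := Nat.card (sm t A).ker

lemma card_eq_card_range_mul_card_ker (f : A →+ B) :
    Nat.card A = Nat.card f.range * Nat.card f.ker := by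
  rw [AddSubgroup.card_eq_card_quotient_mul_card_addSubgroup f.ker]
  congr 1
  exact Nat.card_congr (QuotientAddGroup.quotientKerEquivRange f).toEquiv

lemma SR_mul_SK (t : ℕ) : SR t A * SK t A = Nat.card A :=
  (card_eq_card_range_mul_card_ker (sm t A)).symm

lemma range_sm_map (t : ℕ) (e : A ≃+ B) :
    (sm t B).range = ((sm t A).range.map e.toAddMonoidHom) := by
  ext b
  simp only [AddMonoidHom.mem_range, AddSubgroup.mem_map, sm_apply]
  constructor
  · rintro ⟨y, rfl⟩
    exact ⟨t • e.symm y, ⟨e.symm y, rfl⟩, by simp⟩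
  · rintro ⟨x, ⟨y, rfl⟩, rfl⟩
    exact ⟨e y, by simp⟩

lemma ker_sm_map (t : ℕ) (e : A ≃+ B) :
    (sm t B).ker = ((sm t A).ker.map e.toAddMonoidHom) := by
  ext b
  simp only [AddMonoidHom.mem_ker, AddSubgroup.mem_map, sm_apply]
  constructor
  · intro hb
    refine ⟨e.symm b, ?_, by simp⟩
    have : e (t • e.symm b) = 0 := by simp [hb]
    simpa using (map_eq_zero_iff e e.injective).mp this
  · rintro ⟨x, hx, rfl⟩
    rw [← map_nsmul, hx, map_zero]

lemma SR_congr (t : ℕ) (e : A ≃+ B) : SR t A = SR t B := by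
  rw [SR, SR, range_sm_map t e]
  exact (Nat.card_congr ((sm t A).range.equivMapOfInjective _ e.injective).toEquiv)

lemma SK_congr (t : ℕ) (e : A ≃+ B) : SK t A = SK t B := by
  rw [SK, SK, ker_sm_map t e]
  exact (Nat.card_congr ((sm t A).ker.equivMapOfInjective _ e.injective).toEquiv)

def subgroupPiEquiv {ι : Type*} {A : ι → Type*} [∀ i, AddCommGroup (A i)]
    (H : ∀ i, AddSubgroup (A i)) :
    (AddSubgroup.pi Set.univ H) ≃ ∀ i, H i where
  toFun x i := ⟨x.1 i, x.2 i (Set.mem_univ i)⟩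
  invFun f := ⟨fun i => f i, fun i _ => (f i).2⟩
  left_inv x := rfl
  right_inv f := rfl

lemma SR_pi {ι : Type*} [Fintype ι] (A : ι → Type*) [∀ i, AddCommGroup (A i)] (t : ℕ) :
    SR t (∀ i, A i) = ∏ i, SR t (A i) := by
  have h : (sm t (∀ i, A i)).range = AddSubgroup.pi Set.univ (fun i => (sm t (A i)).range) := by
    ext x
    simp only [AddMonoidHom.mem_range, AddSubgroup.mem_pi, Set.mem_univ, forall_true_left,
      sm_apply]
    constructor
    · rintro ⟨y, rfl⟩ i
      exact ⟨y i, rfl⟩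
    · intro h
      choose y hy using h
      exact ⟨y, funext fun i => hy i⟩
  rw [SR, h, Nat.card_congr (subgroupPiEquiv _), Nat.card_pi]
  rfl

lemma SK_pi {ι : Type*} [Fintype ι] (A : ι → Type*) [∀ i, AddCommGroup (A i)] (t : ℕ) :
    SK t (∀ i, A i) = ∏ i, SK t (A i) := by
  have h : (sm t (∀ i, A i)).ker = AddSubgroup.pi Set.univ (fun i => (sm t (A i)).ker) := by
    ext x
    simp only [AddMonoidHom.mem_ker, AddSubgroup.mem_pi, Set.mem_univ, forall_true_left,
      sm_apply]
    constructor
    · intro h i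
      exact congrFun h i
    · intro h
      exact funext h
  rw [SK, h, Nat.card_congr (subgroupPiEquiv _), Nat.card_pi]
  rfl

lemma range_sm_zmod (N t : ℕ) [NeZero N] : (sm t (ZMod N)).range = AddSubgroup.zmultiples (t : ZMod N) := by
  ext x
  simp only [AddMonoidHom.mem_range, AddSubgroup.mem_zmultiples_iff, sm_apply]
  constructor
  · rintro ⟨y, rfl⟩
    refine ⟨(y.val : ℤ), ?_⟩
    rw [zsmul_eq_mul, nsmul_eq_mul]
    push_cast [ZMod.natCast_val, ZMod.cast_id]
    ring
  · rintro ⟨l, rfl⟩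
    exact ⟨(l : ZMod N), by rw [nsmul_eq_mul, zsmul_eq_mul]; ring⟩


lemma SR_zmod (N t : ℕ) (hN : N ≠ 0) : SR t (ZMod N) = N / N.gcd t := by
  have : NeZero N := ⟨hN⟩
  rw [SR, range_sm_zmod, Nat.card_zmultiples, ZMod.addOrderOf_coe t hN]

lemma SK_zmod (N t : ℕ) (hN : N ≠ 0) : SK t (ZMod N) = N.gcd t := by
  have h := SR_mul_SK (A := ZMod N) t
  rw [SR_zmod N t hN, Nat.card_zmod] at h
  have hg : N.gcd t ∣ N := Nat.gcd_dvd_left N t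
  have hgpos : 0 < N.gcd t := Nat.gcd_pos_of_pos_left _ (Nat.pos_of_ne_zero hN)
  have h2 : N / N.gcd t * N.gcd t = N := Nat.div_mul_cancel hg
  have hpos : 0 < N / N.gcd t := Nat.div_pos (Nat.le_of_dvd (Nat.pos_of_ne_zero hN) hg) hgpos
  exact Nat.eq_of_mul_eq_mul_left hpos (h.trans h2.symm)

lemma gcd_pow_pow (p a b : ℕ) : Nat.gcd (p ^ a) (p ^ b) = p ^ min a b := by
  rcases le_total a b with h | h
  · rw [min_eq_left h, Nat.gcd_eq_left (pow_dvd_pow p h)]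
  · rw [min_eq_right h, Nat.gcd_eq_right (pow_dvd_pow p h)]

lemma SR_pizmod {ι : Type*} [Fintype ι] {p : ℕ} (hp : 0 < p) (c : ι → ℕ) (j : ℕ) :
    SR (p ^ j) (∀ i, ZMod (p ^ c i)) = p ^ (∑ i, (c i - j)) := by
  rw [SR_pi]
  rw [Finset.prod_congr rfl (g := fun i => p ^ (c i - j)) fun i _ => ?_,
    Finset.prod_pow_eq_pow_sum]
  rw [SR_zmod _ _ (pow_pos hp _).ne', gcd_pow_pow, Nat.pow_div (min_le_left _ _) hp]
  congr 1
  omega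

lemma SK_pizmod {ι : Type*} [Fintype ι] {p : ℕ} (hp : 0 < p) (c : ι → ℕ) (j : ℕ) :
    SK (p ^ j) (∀ i, ZMod (p ^ c i)) = p ^ (∑ i, min (c i) j) := by
  rw [SK_pi]
  rw [Finset.prod_congr rfl (g := fun i => p ^ min (c i) j) fun i _ => ?_,
    Finset.prod_pow_eq_pow_sum]
  rw [SK_zmod _ _ (pow_pos hp _).ne', gcd_pow_pow]


def zmodCongr {a b : ℕ} (h : a = b) : ZMod a ≃+ ZMod b := h ▸ AddEquiv.refl (ZMod a)

def piSplitAtAddEquiv {ι : Type*} [DecidableEq ι] (i0 : ι) (A : ι → Type*)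
    [∀ i, AddCommGroup (A i)] : (∀ i, A i) ≃+ A i0 × ∀ i : {j // j ≠ i0}, A i :=
  { Equiv.piSplitAt i0 A with map_add' := fun _ _ => rfl }

def sumPiAddEquiv {ι ι' : Type*} (A : ι ⊕ ι' → Type*) [∀ i, AddCommGroup (A i)] :
    (∀ i, A i) ≃+ (∀ i, A (.inl i)) × ∀ i', A (.inr i') :=
  { Equiv.sumPiEquivProdPi A with map_add' := fun _ _ => rfl }

lemma keyA (p : ℕ) (hp : 1 < p) (N : ℕ) :
    ∀ (ι ι' : Type) [Fintype ι] [DecidableEq ι] [Fintype ι'] [DecidableEq ι']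
      (c : ι → ℕ) (d : ι' → ℕ), (∑ i, c i = N) →
      (∀ j, ∑ i, (c i - j) = ∑ i, (d i - j)) →
      Nonempty ((∀ i, ZMod (p ^ c i)) ≃+ (∀ i, ZMod (p ^ d i))) := by
  induction N using Nat.strong_induction_on with
  | _ N IH =>
  intro ι ι' _ _ _ _ c d hN hinv
  rcases Nat.eq_zero_or_pos N with h0 | h0
  · subst h0
    have hc : ∀ i, c i = 0 := by
      intro i
      exact Finset.sum_eq_zero_iff.mp hN i (Finset.mem_univ i)
    have hd : ∀ i, d i = 0 := by
      have h := (hinv 0).symm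
      simp only [Nat.sub_zero] at h
      rw [hN] at h
      intro i
      exact Finset.sum_eq_zero_iff.mp h i (Finset.mem_univ i)
    haveI : ∀ i : ι, Unique (ZMod (p ^ c i)) := fun i => by
      rw [hc i, pow_zero]; infer_instance
    haveI : ∀ i : ι', Unique (ZMod (p ^ d i)) := fun i => by
      rw [hd i, pow_zero]; infer_instance
    exact ⟨AddEquiv.ofUnique⟩
  · have hne : Nonempty ι := by
      by_contra h
      rw [not_nonempty_iff] at h
      rw [Finset.univ_eq_empty, Finset.sum_empty] at hN
      omega
    obtain ⟨i0, -, hi0⟩ := Finset.exists_mem_eq_sup Finset.univ Finset.univ_nonempty c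
    have hcle : ∀ i, c i ≤ c i0 := fun i => hi0 ▸ Finset.le_sup (Finset.mem_univ i)
    have hsumle : ∀ (f : ι → ℕ), ∑ i, f i = f i0 + ∑ i : {j // j ≠ i0}, f i := by
      intro f
      rw [Fintype.sum_eq_add_sum_compl i0 f]
      congr 1
      refine Finset.sum_subtype _ (fun x => ?_) f
      simp
    have hsumle' : ∀ (f : ι' → ℕ) (i1 : ι'),
        ∑ i, f i = f i1 + ∑ i : {j // j ≠ i1}, f i := by
      intro f i1
      rw [Fintype.sum_eq_add_sum_compl i1 f]
      congr 1
      refine Finset.sum_subtype _ (fun x => ?_) f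
      simp
    have hmxpos : 0 < c i0 := by
      by_contra h
      push_neg at h
      have hz : ∀ i ∈ Finset.univ, c i = 0 := fun i _ => by have := hcle i; omega
      rw [Finset.sum_eq_zero hz] at hN
      omega
    have hdle : ∀ i', d i' ≤ c i0 := by
      intro i'
      have h1 : ∑ i, (c i - c i0) = 0 :=
        Finset.sum_eq_zero fun i _ => by have := hcle i; omega
      have h2 := hinv (c i0)
      rw [h1] at h2
      have h3 : d i' - c i0 ≤ ∑ i, (d i - c i0) :=
        Finset.single_le_sum (f := fun i => d i - c i0) (fun i _ => Nat.zero_le _)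
          (Finset.mem_univ i')
      omega
    obtain ⟨i1, hi1⟩ : ∃ i1, d i1 = c i0 := by
      have h2 := hinv (c i0 - 1)
      have h4 : c i0 - (c i0 - 1) ≤ ∑ i, (c i - (c i0 - 1)) :=
        Finset.single_le_sum (f := fun i => c i - (c i0 - 1)) (fun i _ => Nat.zero_le _)
          (Finset.mem_univ i0)
      have h3 : 1 ≤ ∑ i, (c i - (c i0 - 1)) := by omega
      rw [h2] at h3
      by_contra hno
      push_neg at hno
      have hz : ∀ i' ∈ Finset.univ, d i' - (c i0 - 1) = 0 := fun i' _ => by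
        have := hdle i'; have := hno i'; omega
      rw [Finset.sum_eq_zero hz] at h3
      omega
    have hinv' : ∀ j, ∑ i : {i // i ≠ i0}, (c i - j) = ∑ i : {j' // j' ≠ i1}, (d i - j) := by
      intro j
      have h := hinv j
      rw [hsumle (fun i => c i - j), hsumle' (fun i => d i - j) i1] at h
      omega
    have hNsub : ∑ i : {i // i ≠ i0}, c i = N - c i0 := by
      rw [hsumle c] at hN
      omega
    have hcle' : c i0 ≤ N := by
      rw [hsumle c] at hN
      omega
    obtain ⟨e⟩ := IH (N - c i0) (by omega) {i // i ≠ i0} {j' // j' ≠ i1}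
      (fun i => c i) (fun i => d i) hNsub hinv'
    have hhead : ZMod (p ^ c i0) ≃+ ZMod (p ^ d i1) := zmodCongr (by rw [hi1])
    exact ⟨(piSplitAtAddEquiv i0 (fun i => ZMod (p ^ c i))).trans
      ((hhead.prodCongr e).trans (piSplitAtAddEquiv i1 (fun i => ZMod (p ^ d i))).symm)⟩


lemma exists_pi_zmod (p : ℕ) (hp : p.Prime) (Q : Type*) [AddCommGroup Q] [Finite Q]
    (s : ℕ) (hcard : Nat.card Q ∣ p ^ s) :
    ∃ (ι : Type) (_ : Fintype ι) (c : ι → ℕ),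
      Nonempty (Q ≃+ ∀ i, ZMod (p ^ c i)) := by
  classical
  obtain ⟨ι, hι, q, hq, e, ⟨eq⟩⟩ := AddCommGroup.equiv_directSum_zmod_of_finite Q
  let E : Q ≃+ ∀ i, ZMod (q i ^ e i) := eq.trans (DirectSum.addEquivProd _)
  have hcard2 : ∀ i, q i ^ e i ∣ p ^ s := by
    intro i
    have h1 : Nat.card Q = ∏ i, (q i ^ e i) := by
      rw [Nat.card_congr E.toEquiv, Nat.card_pi]
      exact Finset.prod_congr rfl fun i _ => Nat.card_zmod _
    exact dvd_trans (h1 ▸ Finset.dvd_prod_of_mem _ (Finset.mem_univ i)) hcard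
  set c : ι → ℕ := fun i => if q i = p then e i else 0 with hc
  have hpow : ∀ i, q i ^ e i = p ^ c i := by
    intro i
    by_cases h : q i = p
    · simp [hc, h]
    · have he : e i = 0 := by
        by_contra hne
        have h1 : q i ∣ p ^ s := dvd_trans (dvd_pow_self (q i) hne) (hcard2 i)
        have h2 := Nat.Prime.dvd_of_dvd_pow (hq i) h1
        exact h ((Nat.prime_dvd_prime_iff_eq (hq i) hp).mp h2)
      simp [hc, h, he]
  exact ⟨ι, hι, c, ⟨E.trans (AddEquiv.piCongrRight fun i => zmodCongr (hpow i))⟩⟩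


lemma quot_inv (p : ℕ) (hp : p.Prime) (k n m : ℕ) (β : Fin m → ℕ)
    (K : AddSubgroup (Fin n → ZMod (p ^ k)))
    (e : K ≃+ ∀ i : Fin m, ZMod (p ^ β i)) (j : ℕ) :
    SR (p ^ j) ((Fin n → ZMod (p ^ k)) ⧸ K) *
      (p ^ (n * min k j) * p ^ (∑ i, min (β i) (k - j))) = p ^ (n * k) := by
  have hp1 : 0 < p := hp.pos
  haveI : NeZero (p ^ k) := ⟨(pow_pos hp1 k).ne'⟩
  set f : (Fin n → ZMod (p ^ k)) →+ (Fin n → ZMod (p ^ k)) :=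
    sm (p ^ j) (Fin n → ZMod (p ^ k)) with hf
  set ψ : (Fin n → ZMod (p ^ k)) →+ (Fin n → ZMod (p ^ k)) ⧸ K :=
    (QuotientAddGroup.mk' K).comp f with hψ
  have hpk : ∀ y : Fin n → ZMod (p ^ k), p ^ k • y = 0 := by
    intro y
    funext i
    show (p ^ k : ℕ) • y i = 0
    rw [nsmul_eq_mul, ZMod.natCast_self, zero_mul]
  have hrange : (sm (p ^ j) ((Fin n → ZMod (p ^ k)) ⧸ K)).range = ψ.range := by
    ext x
    simp only [AddMonoidHom.mem_range, AddMonoidHom.coe_comp, Function.comp_apply, sm_apply, hψ,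
      hf]
    constructor
    · rintro ⟨y, rfl⟩
      obtain ⟨z, rfl⟩ := QuotientAddGroup.mk'_surjective K y
      exact ⟨z, ((QuotientAddGroup.mk' K).map_nsmul (p ^ j) z).symm⟩
    · rintro ⟨z, rfl⟩
      exact ⟨QuotientAddGroup.mk' K z, (QuotientAddGroup.mk' K).map_nsmul (p ^ j) z⟩
  have hker : ψ.ker = K.comap f := by
    ext x
    simp [hψ, AddMonoidHom.mem_ker, QuotientAddGroup.eq_zero_iff]
  have hcardG : Nat.card (Fin n → ZMod (p ^ k)) = p ^ (n * k) := by
    rw [Nat.card_pi]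
    simp only [Nat.card_zmod, Finset.prod_const, Finset.card_univ, Fintype.card_fin]
    rw [← pow_mul, mul_comm]
  have hSKG : Nat.card f.ker = p ^ (n * min k j) := by
    have h := SK_pizmod (ι := Fin n) hp1 (fun _ => k) j
    rw [SK, Finset.sum_const, Finset.card_univ, Fintype.card_fin, smul_eq_mul] at h
    exact h
  set T := (sm (p ^ (k - j)) (Fin n → ZMod (p ^ k))).ker with hT'
  have hT : f.range = T := by
    apply AddSubgroup.eq_of_le_of_card_ge
    · rintro x ⟨y, rfl⟩
      show p ^ (k - j) • (p ^ j • y) = 0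
      rw [smul_smul, ← pow_add]
      have hsplit : p ^ (k - j + j) • y = p ^ (k - j + j - k) • (p ^ k • y) := by
        rw [smul_smul, ← pow_add]
        congr 2
        omega
      rw [hsplit, hpk, smul_zero]
    · have h1 : Nat.card f.range = p ^ (n * (k - j)) := by
        have h := SR_pizmod (ι := Fin n) hp1 (fun _ => k) j
        rw [SR, Finset.sum_const, Finset.card_univ, Fintype.card_fin, smul_eq_mul] at h
        exact h
      have h2 : Nat.card T = p ^ (n * (k - j)) := by
        have h := SK_pizmod (ι := Fin n) hp1 (fun _ => k) (k - j)
        rw [SK, Finset.sum_const, Finset.card_univ, Fintype.card_fin, smul_eq_mul] at h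
        rw [hT']
        rw [h]
        congr 2
        omega
      rw [h1, h2]
  set D := K.comap f with hD'
  set g : D →+ (Fin n → ZMod (p ^ k)) := f.comp D.subtype with hg
  have hfkerle : f.ker ≤ D := by
    intro x hx
    rw [AddMonoidHom.mem_ker] at hx
    show f x ∈ K
    rw [hx]
    exact zero_mem K
  have hgker : Nat.card g.ker = Nat.card f.ker := by
    have hh : g.ker = f.ker.addSubgroupOf D := rfl
    rw [hh]
    exact Nat.card_congr (AddSubgroup.addSubgroupOfEquivOfLe hfkerle).toEquiv
  have hgrange : g.range = T ⊓ K := by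
    rw [← hT]
    ext x
    simp only [AddMonoidHom.mem_range, AddSubgroup.mem_inf, hg, AddMonoidHom.coe_comp,
      Function.comp_apply, AddSubgroup.coe_subtype]
    constructor
    · rintro ⟨⟨y, hy⟩, rfl⟩
      exact ⟨⟨y, rfl⟩, hy⟩
    · rintro ⟨⟨y, rfl⟩, hx⟩
      exact ⟨⟨y, hx⟩, rfl⟩
  have hTK : Nat.card (T ⊓ K : AddSubgroup (Fin n → ZMod (p ^ k))) = SK (p ^ (k - j)) K := by
    rw [SK]
    have hto : ∀ x : ↥(T ⊓ K),
        ((⟨x.1, (AddSubgroup.mem_inf.mp x.2).2⟩ : K) ∈ (sm (p ^ (k - j)) K).ker) := by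
      intro x
      have hx : x.1 ∈ T := (AddSubgroup.mem_inf.mp x.2).1
      have hx0 : p ^ (k - j) • x.1 = 0 := hx
      rw [AddMonoidHom.mem_ker]
      exact Subtype.ext hx0
    have hfrom : ∀ y : ↥((sm (p ^ (k - j)) K).ker), (y.1.1 ∈ T ⊓ K) := by
      intro y
      have hy : (sm (p ^ (k - j)) K) y.1 = 0 := y.2
      have hy0 : p ^ (k - j) • y.1.1 = 0 := congrArg Subtype.val hy
      exact AddSubgroup.mem_inf.mpr ⟨hy0, y.1.2⟩
    exact Nat.card_congr ⟨fun x => ⟨_, hto x⟩, fun y => ⟨_, hfrom y⟩,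
      fun x => rfl, fun y => rfl⟩
  have hSKK : SK (p ^ (k - j)) K = p ^ (∑ i, min (β i) (k - j)) := by
    rw [SK_congr _ e]
    exact SK_pizmod hp1 β (k - j)
  have h1 : Nat.card (Fin n → ZMod (p ^ k)) = Nat.card ψ.range * Nat.card ψ.ker :=
    card_eq_card_range_mul_card_ker ψ
  have h2 : Nat.card ψ.ker = Nat.card D := by rw [hker]
  have h3 : Nat.card D = Nat.card g.range * Nat.card g.ker :=
    card_eq_card_range_mul_card_ker g
  rw [hgrange, hTK, hSKK, hgker, hSKG] at h3
  rw [h2, h3, hcardG] at h1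
  have h4 : SR (p ^ j) ((Fin n → ZMod (p ^ k)) ⧸ K) = Nat.card ψ.range := by
    rw [SR, hrange]
  rw [h4, h1]
  ring

end Stmt5Aux

theorem stmt5 (p : ℕ) (hp : p.Prime) (k n : ℕ) (hk : 0 < k) (hn : 0 < n)
    (m : ℕ) (hm : m ≤ n) (β : Fin m → ℕ)
    (hβk : ∀ i, β i ≤ k) (hβ1 : ∀ i, 1 ≤ β i) (hβ : Antitone β)
    (K : AddSubgroup (Fin n → ZMod (p ^ k)))
    (hK : Nonempty (K ≃+ Π i : Fin m, ZMod (p ^ β i))) :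
    Nonempty (((Fin n → ZMod (p ^ k)) ⧸ K) ≃+
      ((Fin (n - m) → ZMod (p ^ k)) × Π i : Fin m, ZMod (p ^ (k - β i.rev)))) := by
  classical
  obtain ⟨e⟩ := hK
  have hp1 : 0 < p := hp.pos
  have hp2 : 1 < p := hp.one_lt
  haveI : NeZero (p ^ k) := ⟨(pow_pos hp1 k).ne'⟩
  have hcardG : Nat.card (Fin n → ZMod (p ^ k)) = p ^ (n * k) := by
    rw [Nat.card_pi]
    simp only [Nat.card_zmod, Finset.prod_const, Finset.card_univ, Fintype.card_fin]
    rw [← pow_mul, mul_comm]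
  have hdvd : Nat.card ((Fin n → ZMod (p ^ k)) ⧸ K) ∣ p ^ (n * k) := by
    rw [← hcardG]
    exact ⟨Nat.card K, AddSubgroup.card_eq_card_quotient_mul_card_addSubgroup K⟩
  obtain ⟨ι, hι, c, ⟨E⟩⟩ := Stmt5Aux.exists_pi_zmod p hp _ (n * k) hdvd
  haveI := Classical.decEq ι
  -- the invariant identity for the quotient group
  have hexp : ∀ j, (∑ i, (c i - j)) + (n * min k j + ∑ i, min (β i) (k - j)) = n * k := by
    intro j
    have hq := Stmt5Aux.quot_inv p hp k n m β K e j
    have hs : Stmt5Aux.SR (p ^ j) ((Fin n → ZMod (p ^ k)) ⧸ K) = p ^ (∑ i, (c i - j)) := by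
      rw [Stmt5Aux.SR_congr _ E]
      exact Stmt5Aux.SR_pizmod hp1 c j
    rw [hs, ← pow_add, ← pow_add] at hq
    exact Nat.pow_right_injective hp.two_le hq
  -- the invariant identity for the target group
  have htar : ∀ j, ((n - m) * (k - j) + ∑ i : Fin m, ((k - β i.rev) - j))
      + (n * min k j + ∑ i, min (β i) (k - j)) = n * k := by
    intro j
    have hrev : ∑ i : Fin m, ((k - β i.rev) - j) = ∑ i : Fin m, ((k - β i) - j) :=
      Fintype.sum_equiv Fin.revPerm _ _ (fun x => rfl)
    have hterm : ∑ i : Fin m, (((k - β i) - j) + min (β i) (k - j)) = m * (k - j) := by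
      rw [Finset.sum_congr rfl (g := fun _ => k - j) (fun i _ => by have := hβk i; show k - β i - j + min (β i) (k - j) = k - j; omega)]
      rw [Finset.sum_const, Finset.card_univ, Fintype.card_fin, smul_eq_mul]
    rw [hrev]
    have h2 : (n - m) * (k - j) + m * (k - j) = n * (k - j) := by
      rw [← add_mul, Nat.sub_add_cancel hm]
    have h3 : n * (k - j) + n * min k j = n * k := by
      rw [← Nat.mul_add]
      congr 1
      omega
    calc (n - m) * (k - j) + ∑ i : Fin m, ((k - β i) - j)
          + (n * min k j + ∑ i, min (β i) (k - j))
        = (n - m) * (k - j) + (∑ i : Fin m, (((k - β i) - j) + min (β i) (k - j)))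
          + n * min k j := by rw [Finset.sum_add_distrib]; ring
      _ = (n - m) * (k - j) + m * (k - j) + n * min k j := by rw [hterm]
      _ = n * k := by rw [h2, h3]
  -- combine
  have hinv2 : ∀ j, ∑ i, (c i - j) =
      ∑ x : (Fin (n - m)) ⊕ (Fin m), (Sum.elim (fun _ => k) (fun i : Fin m => k - β i.rev) x - j) := by
    intro j
    rw [Fintype.sum_sum_type]
    simp only [Sum.elim_inl, Sum.elim_inr]
    rw [Finset.sum_const, Finset.card_univ, Fintype.card_fin, smul_eq_mul]
    exact Nat.add_right_cancel ((hexp j).trans (htar j).symm)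
  obtain ⟨E2⟩ := Stmt5Aux.keyA p hp2 (∑ i, c i) ι ((Fin (n - m)) ⊕ (Fin m)) c
    (Sum.elim (fun _ => k) (fun i : Fin m => k - β i.rev)) rfl hinv2
  exact ⟨E.trans (E2.trans
    (Stmt5Aux.sumPiAddEquiv (fun x => ZMod (p ^ (Sum.elim (fun _ => k) (fun i : Fin m => k - β i.rev) x)))))⟩
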